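/- The bound FDR ≤ m_0·α/m is attained for both the step-up and step-down Benjamini–Hochberg tests: if p = (U, 0, …, 0) with U uniform on [0,1], m_0 = 1, I_0 = {1}, then FDR = P(U ≤ α)/m = α/m. -/

import Mathlib

open MeasureTheory ProbabilityTheory Finset
open scoped Classical
noncomputable section

/-- `#{i : p i ≤ t}`, i.e. `m·F̂_m(t)`. -/
def countLE {m : ℕ} (p : Fin m → ℝ) (t : ℝ) : ℕ :=
  (Finset.univ.filter (fun i => p i ≤ t)).card

/-- The `i`-th order statistic `p_{i:m}` (for `1 ≤ i ≤ m`), characterized by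
`p_{i:m} ≤ t ↔ i ≤ #{k : p k ≤ t}`. -/
def orderStat {m : ℕ} (p : Fin m → ℝ) (i : ℕ) : ℝ :=
  sInf {t | i ≤ countLE p t}

/-- Step-up rejection number `R = max {j : p_{j:m} ≤ α_j}` (`max ∅ = 0`). -/
def suR {m : ℕ} (α : ℕ → ℝ) (p : Fin m → ℝ) : ℕ :=
  WithBot.unbotD 0 (((Finset.range (m+1)).filter (fun j => 1 ≤ j ∧ orderStat p j ≤ α j)).max)

/-- Step-down rejection number `R = max {j : p_{i:m} ≤ α_i for all i ≤ j}`. -/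
def sdR {m : ℕ} (α : ℕ → ℝ) (p : Fin m → ℝ) : ℕ :=
  WithBot.unbotD 0 (((Finset.range (m+1)).filter
    (fun j => ∀ i ∈ Finset.Icc 1 j, orderStat p i ≤ α i)).max)

/-- FDR `= E[V / max(R,1)]` for rejection number `R` and rejection rule `rej`. -/
def FDR {Ω : Type*} [MeasurableSpace Ω] (μ : Measure Ω) {m : ℕ}
    (p : Ω → Fin m → ℝ) (I0 : Finset (Fin m))
    (R : (Fin m → ℝ) → ℕ) (rej : (Fin m → ℝ) → Fin m → Prop) : ℝ :=
  ∫ ω, ((I0.filter (fun i => rej (p ω) i)).card : ℝ) / (max (R (p ω)) 1 : ℕ) ∂μ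

/-- FDR of the step-up test with critical values `α`. -/
def suFDR {Ω : Type*} [MeasurableSpace Ω] (μ : Measure Ω) {m : ℕ}
    (α : ℕ → ℝ) (p : Ω → Fin m → ℝ) (I0 : Finset (Fin m)) : ℝ :=
  FDR μ p I0 (suR α) (fun q i => q i ≤ α (suR α q))

/-- FDR of the step-down test with critical values `α`
(rejecting the hypotheses belonging to `p_{i:m}`, `i ≤ R`). -/
def sdFDR {Ω : Type*} [MeasurableSpace Ω] (μ : Measure Ω) {m : ℕ}
    (α : ℕ → ℝ) (p : Ω → Fin m → ℝ) (I0 : Finset (Fin m)) : ℝ :=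
  FDR μ p I0 (sdR α) (fun q i => 1 ≤ sdR α q ∧ q i ≤ orderStat q (sdR α q))

/-- Benjamini–Hochberg critical values `b_j = jα/m`. -/
def bh (m : ℕ) (α : ℝ) (j : ℕ) : ℝ := j * α / m

/-- The uniform distribution on `[0,1]`. -/
def unif01 : Measure ℝ := volume.restrict (Set.Icc 0 1)

-- Auxiliary lemmas
lemma max_unbot'_eq {s : Finset ℕ} {a : ℕ} (ha : a ∈ s) (h : ∀ b ∈ s, b ≤ a) :
    WithBot.unbotD 0 s.max = a := by
  have h1 : s.max = (a : WithBot ℕ) :=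
    le_antisymm (Finset.max_le (fun b hb => WithBot.coe_le_coe.mpr (h b hb))) (Finset.le_max ha)
  rw [h1]; rfl

lemma max_unbot'_le {s : Finset ℕ} {a : ℕ} (h : ∀ b ∈ s, b ≤ a) :
    WithBot.unbotD 0 s.max ≤ a := by
  rcases s.eq_empty_or_nonempty with rfl | hs
  · simp
  · rw [max_unbot'_eq (s.max'_mem hs) (fun b hb => Finset.le_max' s b hb)]
    exact h _ (s.max'_mem hs)

lemma max_unbot'_mem {s : Finset ℕ} (h : 1 ≤ WithBot.unbotD 0 s.max) : WithBot.unbotD 0 s.max ∈ s := by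
  rcases s.eq_empty_or_nonempty with rfl | hs
  · simp at h
  · rw [max_unbot'_eq (s.max'_mem hs) (fun b hb => Finset.le_max' s b hb)]
    exact s.max'_mem hs

variable {m : ℕ}

def q (m : ℕ) (u : ℝ) : Fin m → ℝ := fun i => if (i : ℕ) = 0 then u else 0

lemma countLE_neg {u t : ℝ} (hu : 0 ≤ u) (ht : t < 0) : countLE (q m u) t = 0 := by
  unfold countLE
  rw [Finset.card_eq_zero, Finset.filter_eq_empty_iff]
  intro i _
  simp only [q]
  split <;> push_neg <;> linarith

lemma countLE_zero_ge (u : ℝ) : m - 1 ≤ countLE (q m u) 0 := by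
  rcases Nat.eq_zero_or_pos m with rfl | hm
  · simp
  have h : (Finset.univ.filter (fun i : Fin m => ¬ ((i:ℕ) = 0))) ⊆
      (Finset.univ.filter (fun i : Fin m => q m u i ≤ 0)) := by
    intro i hi
    simp only [Finset.mem_filter, Finset.mem_univ, true_and] at hi ⊢
    simp [q, hi]
  have key := Finset.card_filter_add_card_filter_not
      (s := (Finset.univ : Finset (Fin m))) (p := fun i : Fin m => (i:ℕ) = 0)
  have h1 : (Finset.univ.filter (fun i : Fin m => (i:ℕ) = 0)) = {⟨0, hm⟩} := by
    ext i; simp [Fin.ext_iff]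
  rw [h1, Finset.card_singleton, Finset.card_univ, Fintype.card_fin] at key
  have h2 : (Finset.univ.filter (fun i : Fin m => ¬ ((i:ℕ) = 0))).card = m - 1 := by omega
  calc m - 1 = (Finset.univ.filter (fun i : Fin m => ¬ ((i:ℕ) = 0))).card := h2.symm
    _ ≤ _ := Finset.card_le_card h

lemma countLE_le (p : Fin m → ℝ) (t : ℝ) : countLE p t ≤ m := by
  unfold countLE
  calc _ ≤ (Finset.univ : Finset (Fin m)).card := Finset.card_le_card (Finset.filter_subset _ _)
    _ = m := by simp

lemma orderStat_small {u : ℝ} (hu : 0 ≤ u) {i : ℕ} (h1 : 1 ≤ i) (h2 : i < m) :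
    orderStat (q m u) i = 0 := by
  unfold orderStat
  have hmem : (0:ℝ) ∈ {t | i ≤ countLE (q m u) t} := by
    have := countLE_zero_ge (m := m) u
    simp only [Set.mem_setOf_eq]; omega
  have hlb : ∀ t ∈ {t | i ≤ countLE (q m u) t}, (0:ℝ) ≤ t := by
    intro t ht
    by_contra hlt
    push_neg at hlt
    rw [Set.mem_setOf_eq, countLE_neg hu hlt] at ht
    omega
  exact le_antisymm (csInf_le ⟨0, hlb⟩ hmem) (le_csInf ⟨0, hmem⟩ hlb)

lemma orderStat_top {u : ℝ} (hu : 0 ≤ u) (hm : 1 ≤ m) :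
    orderStat (q m u) m = u := by
  unfold orderStat
  have hset : {t | m ≤ countLE (q m u) t} = Set.Ici u := by
    ext t
    simp only [Set.mem_setOf_eq, Set.mem_Ici]
    constructor
    · intro h
      have hall : (Finset.univ.filter (fun i : Fin m => q m u i ≤ t)) = Finset.univ := by
        apply Finset.eq_univ_of_card
        have h2 := countLE_le (q m u) t
        unfold countLE at h h2
        simp only [Finset.card_univ, Fintype.card_fin]
        omega
      have h0 : (⟨0, hm⟩ : Fin m) ∈ Finset.univ.filter (fun i : Fin m => q m u i ≤ t) := by
        rw [hall]; exact Finset.mem_univ _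
      simpa [q] using (Finset.mem_filter.mp h0).2
    · intro h
      unfold countLE
      have : (Finset.univ.filter (fun i : Fin m => q m u i ≤ t)) = Finset.univ := by
        apply Finset.eq_univ_of_forall
        intro i
        simp only [Finset.mem_filter, Finset.mem_univ, true_and]; simp only [q]
        split
        · exact h
        · linarith
      rw [this]; simp
  rw [hset, csInf_Ici]

lemma bh_nonneg {α : ℝ} (hα : 0 ≤ α) (j : ℕ) : 0 ≤ bh m α j := by
  unfold bh; positivity

lemma bh_m {α : ℝ} (hm : 1 ≤ m) : bh m α m = α := by
  have hm0 : (m:ℝ) ≠ 0 := by positivity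
  unfold bh
  field_simp

lemma bh_le {α : ℝ} (hα : 0 ≤ α) {j : ℕ} (hj : j ≤ m) (hm : 1 ≤ m) : bh m α j ≤ α := by
  have hm0 : (0:ℝ) < m := by exact_mod_cast hm
  have hjm : (j:ℝ) ≤ m := by exact_mod_cast hj
  unfold bh
  rw [div_le_iff₀ hm0]
  nlinarith

lemma suR_le (α : ℕ → ℝ) (p : Fin m → ℝ) : suR α p ≤ m := by
  apply max_unbot'_le
  intro b hb
  simp only [Finset.mem_filter, Finset.mem_range] at hb
  omega

lemma sdR_le (α : ℕ → ℝ) (p : Fin m → ℝ) : sdR α p ≤ m := by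
  apply max_unbot'_le
  intro b hb
  simp only [Finset.mem_filter, Finset.mem_range] at hb
  omega

lemma suR_eq_m {u α : ℝ} (hu : 0 ≤ u) (hua : u ≤ α) (hm : 1 ≤ m) :
    suR (bh m α) (q m u) = m := by
  apply max_unbot'_eq
  · simp only [Finset.mem_filter, Finset.mem_range]
    refine ⟨by omega, hm, ?_⟩
    rw [orderStat_top hu hm, bh_m hm]
    exact hua
  · intro b hb
    simp only [Finset.mem_filter, Finset.mem_range] at hb
    omega

lemma sdR_eq_m {u α : ℝ} (hu : 0 ≤ u) (hua : u ≤ α) (hα : 0 ≤ α) (hm : 1 ≤ m) :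
    sdR (bh m α) (q m u) = m := by
  apply max_unbot'_eq
  · simp only [Finset.mem_filter, Finset.mem_range]
    refine ⟨by omega, ?_⟩
    intro i hi
    obtain ⟨hi1, hi2⟩ := Finset.mem_Icc.mp hi
    rcases lt_or_eq_of_le hi2 with h | h
    · rw [orderStat_small hu hi1 h]
      exact bh_nonneg hα i
    · subst h
      rw [orderStat_top hu hm, bh_m hm]
      exact hua
  · intro b hb
    simp only [Finset.mem_filter, Finset.mem_range] at hb
    omega

lemma sdR_ne_m {u α : ℝ} (hu : 0 ≤ u) (hua : α < u) (hm : 1 ≤ m) :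
    sdR (bh m α) (q m u) ≠ m := by
  intro h
  have h1 : 1 ≤ sdR (bh m α) (q m u) := by omega
  unfold sdR at h1 h
  have h2 := max_unbot'_mem h1
  simp only [Finset.mem_filter, Finset.mem_range] at h2
  have h4 := h2.2 m (Finset.mem_Icc.mpr ⟨by omega, by omega⟩)
  rw [orderStat_top hu hm, bh_m hm] at h4
  linarith

lemma I0_eq (hm : 1 ≤ m) :
    (Finset.univ.filter (fun i : Fin m => (i:ℕ) = 0)) = {⟨0, hm⟩} := by
  ext i; simp [Fin.ext_iff]

lemma num_card (hm : 1 ≤ m) (P : Fin m → Prop) :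
    ((Finset.univ.filter (fun i : Fin m => (i:ℕ) = 0)).filter P).card
      = if P ⟨0, hm⟩ then 1 else 0 := by
  rw [I0_eq hm, Finset.filter_singleton]
  split <;> simp

lemma q_zero (hm : 1 ≤ m) (u : ℝ) : q m u ⟨0, hm⟩ = u := by simp [q]

lemma su_point (hm : 1 ≤ m) {u α : ℝ} (hu : 0 ≤ u) (hα : 0 < α) :
    (((Finset.univ.filter (fun i : Fin m => (i:ℕ) = 0)).filter
        (fun i => (fun i : Fin m => if (i:ℕ) = 0 then u else 0) i ≤
          bh m α (suR (bh m α) (fun i : Fin m => if (i:ℕ) = 0 then u else 0)))).card : ℝ)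
      / ((max (suR (bh m α) (fun i : Fin m => if (i:ℕ) = 0 then u else 0)) 1 : ℕ) : ℝ)
    = if u ≤ α then (m:ℝ)⁻¹ else 0 := by
  show (((Finset.univ.filter (fun i : Fin m => (i:ℕ) = 0)).filter
        (fun i => q m u i ≤ bh m α (suR (bh m α) (q m u)))).card : ℝ)
      / ((max (suR (bh m α) (q m u)) 1 : ℕ) : ℝ)
    = if u ≤ α then (m:ℝ)⁻¹ else 0
  rw [num_card hm]
  by_cases h : u ≤ α
  · rw [if_pos h, suR_eq_m hu h hm, q_zero hm, bh_m hm, if_pos h,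
      Nat.max_eq_left hm]
    simp
  · rw [if_neg h]
    have hb : bh m α (suR (bh m α) (q m u)) ≤ α :=
      bh_le hα.le (suR_le _ _) hm
    rw [q_zero hm, if_neg (by push_neg at h ⊢; linarith)]
    simp

lemma sd_point (hm : 1 ≤ m) {u α : ℝ} (hu : 0 ≤ u) (hα : 0 < α) :
    ((@Finset.filter (Fin m)
        (fun i => 1 ≤ sdR (bh m α) (fun i : Fin m => if (i:ℕ) = 0 then u else 0) ∧
          (fun i : Fin m => if (i:ℕ) = 0 then u else 0) i ≤
            orderStat (fun i : Fin m => if (i:ℕ) = 0 then u else 0)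
              (sdR (bh m α) (fun i : Fin m => if (i:ℕ) = 0 then u else 0)))
        (fun i => Classical.propDecidable _)
        (Finset.univ.filter (fun i : Fin m => (i:ℕ) = 0))).card : ℝ)
      / ((max (sdR (bh m α) (fun i : Fin m => if (i:ℕ) = 0 then u else 0)) 1 : ℕ) : ℝ)
    = if u ≤ α then (m:ℝ)⁻¹ else 0 := by
  rw [Finset.filter_congr_decidable]
  show (((Finset.univ.filter (fun i : Fin m => (i:ℕ) = 0)).filter
        (fun i => 1 ≤ sdR (bh m α) (q m u) ∧
          q m u i ≤ orderStat (q m u) (sdR (bh m α) (q m u)))).card : ℝ)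
      / ((max (sdR (bh m α) (q m u)) 1 : ℕ) : ℝ)
    = if u ≤ α then (m:ℝ)⁻¹ else 0
  rw [I0_eq hm, Finset.filter_singleton]
  by_cases h : u ≤ α
  · rw [if_pos h]
    have hR := sdR_eq_m hu h hα.le hm
    rw [hR, q_zero hm, if_pos ⟨hm, by rw [orderStat_top hu hm]⟩, Nat.max_eq_left hm]
    simp
  · push_neg at h
    rw [if_neg (not_le.mpr h)]
    rw [q_zero hm, if_neg ?_]
    · simp
    · rintro ⟨h1, h2⟩
      have hle := sdR_le (bh m α) (q m u)
      have hne := sdR_ne_m hu h hm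
      rw [orderStat_small hu h1 (by omega)] at h2
      linarith

/-- Sharpness of the bound `FDR ≤ m₀α/m`: for
`p = (U, 0, …, 0)` with `U` uniform on `[0,1]`, `m₀ = 1`, `I₀ = {1}`, both the
step-up and the step-down BH tests have `FDR = P(U ≤ α)/m = α/m`. -/
theorem bh_bound_attained
    {Ω : Type*} [MeasurableSpace Ω] (μ : Measure Ω) [IsProbabilityMeasure μ]
    (m : ℕ) (hm : 1 ≤ m) (α : ℝ) (hα : α ∈ Set.Ioo (0:ℝ) 1)
    (U : Ω → ℝ) (hU : Measurable U) (hUunif : Measure.map U μ = unif01) :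
    suFDR μ (bh m α) (fun ω i => if (i : ℕ) = 0 then U ω else 0)
        (Finset.univ.filter (fun i : Fin m => (i : ℕ) = 0)) = α / m ∧
    sdFDR μ (bh m α) (fun ω i => if (i : ℕ) = 0 then U ω else 0)
        (Finset.univ.filter (fun i : Fin m => (i : ℕ) = 0)) = α / m := by
  obtain ⟨hα0, hα1⟩ := hα
  have hm0 : (m:ℝ) ≠ 0 := Nat.cast_ne_zero.mpr (by omega)
  have hae : ∀ᵐ ω ∂μ, 0 ≤ U ω := by
    rw [ae_iff]
    have h1 : {ω | ¬ 0 ≤ U ω} = U ⁻¹' Set.Iio 0 := by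
      ext ω; simp [Set.mem_preimage, not_le]
    rw [h1, ← Measure.map_apply hU measurableSet_Iio, hUunif]
    unfold unif01
    rw [Measure.restrict_apply measurableSet_Iio]
    have h2 : Set.Iio (0:ℝ) ∩ Set.Icc 0 1 = ∅ := by
      ext x
      simp only [Set.mem_inter_iff, Set.mem_Iio, Set.mem_Icc, Set.mem_empty_iff_false,
        iff_false, not_and]
      intro h h2; linarith
    rw [h2, measure_empty]
  have hmeas : MeasurableSet (U ⁻¹' Set.Iic α) := hU measurableSet_Iic
  have hμ : (μ (U ⁻¹' Set.Iic α)).toReal = α := by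
    rw [← Measure.map_apply hU measurableSet_Iic, hUunif]
    unfold unif01
    rw [Measure.restrict_apply measurableSet_Iic]
    have h3 : Set.Iic α ∩ Set.Icc 0 1 = Set.Icc 0 α := by
      ext x
      simp only [Set.mem_inter_iff, Set.mem_Iic, Set.mem_Icc]
      constructor
      · rintro ⟨h1, h2, _⟩; exact ⟨h2, h1⟩
      · rintro ⟨h1, h2⟩; exact ⟨h2, h1, by linarith⟩
    rw [h3, Real.volume_Icc]
    rw [show α - 0 = α by ring, ENNReal.toReal_ofReal hα0.le]
  have key : ∀ (g : Ω → ℝ),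
      (∀ ω, 0 ≤ U ω → g ω = if U ω ≤ α then (m:ℝ)⁻¹ else 0) →
      ∫ ω, g ω ∂μ = α / m := by
    intro g hg
    have hcong : g =ᵐ[μ] (U ⁻¹' Set.Iic α).indicator (fun _ => (m:ℝ)⁻¹) := by
      filter_upwards [hae] with ω hω
      rw [hg ω hω, Set.indicator_apply]
      simp [Set.mem_preimage, Set.mem_Iic]
    rw [integral_congr_ae hcong, integral_indicator_const _ hmeas, measureReal_def, hμ,
      smul_eq_mul, div_eq_mul_inv]
  constructor
  · unfold suFDR FDR
    apply key
    intro ω hω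
    exact su_point hm hω hα0
  · unfold sdFDR FDR
    apply key
    intro ω hω
    exact sd_point hm hω hα0
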